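/- Let φ : ℝ² → ℝ be twice continuously differentiable with compact support contained in the open unit disc D1, and let f = d²φ be the symmetric 2-tensor field with components f11 = ∂²φ/∂x1², f12 = ∂²φ/∂x1∂x2, f22 = ∂²φ/∂x2². Then for every x ∈ ℝ²: φ(x) = (1/(2 u2)) ∫₀^∞ Lf(x + s e2) ds = −(1/(2 u2)) ∫₀^∞ Mf(x + s e1) ds. -/

import Mathlib

noncomputable section

open MeasureTheory

/-- The divergent beam transform `X_w h (x) = ∫₀^∞ h(x + t w) dt`. -/
def Xbeam (w : ℝ × ℝ) (h : ℝ × ℝ → ℝ) (x : ℝ × ℝ) : ℝ :=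
  ∫ t in Set.Ioi (0 : ℝ), h (x + t • w)

/-- The k-th moment divergent beam transform `X_w^k h (x) = ∫₀^∞ t^k h(x + t w) dt`. -/
def Xmom (k : ℕ) (w : ℝ × ℝ) (h : ℝ × ℝ → ℝ) (x : ℝ × ℝ) : ℝ :=
  ∫ t in Set.Ioi (0 : ℝ), t ^ k * h (x + t • w)

/-- The directional derivative `D_w h = w ⋅ ∇h`. -/
def Dir (w : ℝ × ℝ) (h : ℝ × ℝ → ℝ) (x : ℝ × ℝ) : ℝ :=
  fderiv ℝ h x w

/-- Support contained in the open unit disc `D1`. -/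
def SuppInDisc (h : ℝ × ℝ → ℝ) : Prop :=
  ∀ x : ℝ × ℝ, 1 ≤ x.1 ^ 2 + x.2 ^ 2 → h x = 0

/-- The longitudinal V-line transform. -/
def VlineL (u1 u2 : ℝ) (f11 f12 f22 : ℝ × ℝ → ℝ) : ℝ × ℝ → ℝ :=
  Xbeam (u1, u2) (fun y => u1 ^ 2 * f11 y + 2 * u1 * u2 * f12 y + u2 ^ 2 * f22 y)
    + Xbeam (-u1, u2) (fun y => u1 ^ 2 * f11 y - 2 * u1 * u2 * f12 y + u2 ^ 2 * f22 y)

/-- The transverse V-line transform. -/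
def VlineT (u1 u2 : ℝ) (f11 f12 f22 : ℝ × ℝ → ℝ) : ℝ × ℝ → ℝ :=
  Xbeam (u1, u2) (fun y => u2 ^ 2 * f11 y - 2 * u1 * u2 * f12 y + u1 ^ 2 * f22 y)
    + Xbeam (-u1, u2) (fun y => u2 ^ 2 * f11 y + 2 * u1 * u2 * f12 y + u1 ^ 2 * f22 y)

/-- The mixed V-line transform. -/
def VlineM (u1 u2 : ℝ) (f11 f12 f22 : ℝ × ℝ → ℝ) : ℝ × ℝ → ℝ :=
  Xbeam (u1, u2) (fun y => -(u1 * u2) * f11 y + (u1 ^ 2 - u2 ^ 2) * f12 y + u1 * u2 * f22 y)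
    + Xbeam (-u1, u2) (fun y => u1 * u2 * f11 y + (u1 ^ 2 - u2 ^ 2) * f12 y - u1 * u2 * f22 y)

/-- The k-th moment longitudinal V-line transform. -/
def VlineLk (k : ℕ) (u1 u2 : ℝ) (f11 f12 f22 : ℝ × ℝ → ℝ) : ℝ × ℝ → ℝ :=
  Xmom k (u1, u2) (fun y => u1 ^ 2 * f11 y + 2 * u1 * u2 * f12 y + u2 ^ 2 * f22 y)
    + Xmom k (-u1, u2) (fun y => u1 ^ 2 * f11 y - 2 * u1 * u2 * f12 y + u2 ^ 2 * f22 y)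

/-- The k-th moment transverse V-line transform. -/
def VlineTk (k : ℕ) (u1 u2 : ℝ) (f11 f12 f22 : ℝ × ℝ → ℝ) : ℝ × ℝ → ℝ :=
  Xmom k (u1, u2) (fun y => u2 ^ 2 * f11 y - 2 * u1 * u2 * f12 y + u1 ^ 2 * f22 y)
    + Xmom k (-u1, u2) (fun y => u2 ^ 2 * f11 y + 2 * u1 * u2 * f12 y + u1 ^ 2 * f22 y)

/-- The k-th moment mixed V-line transform. -/
def VlineMk (k : ℕ) (u1 u2 : ℝ) (f11 f12 f22 : ℝ × ℝ → ℝ) : ℝ × ℝ → ℝ :=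
  Xmom k (u1, u2) (fun y => -(u1 * u2) * f11 y + (u1 ^ 2 - u2 ^ 2) * f12 y + u1 * u2 * f22 y)
    + Xmom k (-u1, u2) (fun y => u1 * u2 * f11 y + (u1 ^ 2 - u2 ^ 2) * f12 y - u1 * u2 * f22 y)


lemma ftc_beam (g : ℝ × ℝ → ℝ) (hg : ContDiff ℝ 1 g)
    (hs : ∀ y : ℝ × ℝ, 1 < y.1 ^ 2 + y.2 ^ 2 → g y = 0)
    (w : ℝ × ℝ) (hw : w.1 ^ 2 + w.2 ^ 2 = 1) (x : ℝ × ℝ) :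
    (∫ t in Set.Ioi (0 : ℝ), fderiv ℝ g (x + t • w) w) = - g x := by
  set T : ℝ := x.1 ^ 2 + x.2 ^ 2 + 2 with hTdef
  have hT0 : 0 < T := by positivity
  have hfar : ∀ t : ℝ, T ≤ t → 1 < (x + t • w).1 ^ 2 + (x + t • w).2 ^ 2 := by
    intro t ht
    have h1 : (x + t • w).1 = x.1 + t * w.1 := rfl
    have h2 : (x + t • w).2 = x.2 + t * w.2 := rfl
    rw [h1, h2]
    have hc2 : (x.1 * w.1 + x.2 * w.2) ^ 2 ≤ x.1 ^ 2 + x.2 ^ 2 := by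
      nlinarith [sq_nonneg (x.1 * w.2 - x.2 * w.1)]
    have hcl : -((x.1 ^ 2 + x.2 ^ 2) + 1) / 2 ≤ x.1 * w.1 + x.2 * w.2 := by
      nlinarith [sq_nonneg (x.1 ^ 2 + x.2 ^ 2 - 1), sq_nonneg (2 * (x.1 * w.1 + x.2 * w.2) + x.1 ^ 2 + x.2 ^ 2 + 1)]
    have htc : (3:ℝ)/2 ≤ t + (x.1 * w.1 + x.2 * w.2) := by
      have : (0:ℝ) ≤ x.1 ^ 2 + x.2 ^ 2 := by positivity
      simp only [hTdef] at ht
      linarith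
    have h9 : ((3:ℝ)/2) ^ 2 ≤ (t + (x.1 * w.1 + x.2 * w.2)) ^ 2 :=
      pow_le_pow_left₀ (by norm_num) htc 2
    have hexp : (x.1 + t * w.1) ^ 2 + (x.2 + t * w.2) ^ 2
        = (x.1 ^ 2 + x.2 ^ 2) + 2 * t * (x.1 * w.1 + x.2 * w.2)
          + t ^ 2 * (w.1 ^ 2 + w.2 ^ 2) := by ring
    rw [hexp, hw]
    nlinarith [h9, hc2]
  have hderiv : ∀ t : ℝ, HasDerivAt (fun t => g (x + t • w)) (fderiv ℝ g (x + t • w) w) t := by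
    intro t
    have hline : HasDerivAt (fun t : ℝ => x + t • w) w t := by
      simpa using ((hasDerivAt_id t).smul_const w).const_add x
    exact ((hg.differentiable one_ne_zero) (x + t • w)).hasFDerivAt.comp_hasDerivAt t hline
  have hU : IsOpen {y : ℝ × ℝ | 1 < y.1 ^ 2 + y.2 ^ 2} := by
    have hcont : Continuous fun y : ℝ × ℝ => y.1 ^ 2 + y.2 ^ 2 := by fun_prop
    exact isOpen_lt continuous_const hcont
  have hfd0 : ∀ y : ℝ × ℝ, 1 < y.1 ^ 2 + y.2 ^ 2 → fderiv ℝ g y = 0 := by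
    intro y hy
    have hev : g =ᶠ[nhds y] (fun _ => (0:ℝ)) :=
      Filter.eventually_of_mem (hU.mem_nhds hy) (fun z hz => hs z hz)
    rw [hev.fderiv_eq]
    exact fderiv_const_apply 0
  have hcont' : Continuous fun t : ℝ => fderiv ℝ g (x + t • w) w := by
    have h1 : Continuous (fderiv ℝ g) := hg.continuous_fderiv one_ne_zero
    have h2 : Continuous fun t : ℝ => x + t • w := by fun_prop
    exact (ContinuousLinearMap.apply ℝ ℝ w).continuous.comp (h1.comp h2)
  have hint : IntegrableOn (fun t : ℝ => fderiv ℝ g (x + t • w) w) (Set.Ioi 0) := by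
    have h1 : IntegrableOn (fun t : ℝ => fderiv ℝ g (x + t • w) w) (Set.Ioc 0 T) :=
      hcont'.integrableOn_Ioc
    have h2 : IntegrableOn (fun t : ℝ => fderiv ℝ g (x + t • w) w) (Set.Ioi T) := by
      refine (integrableOn_congr_fun (fun t ht => ?_) measurableSet_Ioi).mpr
        (integrableOn_zero (s := Set.Ioi T))
      rw [hfd0 _ (hfar t (le_of_lt ht))]
      rfl
    have h3 := h1.union h2
    rwa [Set.Ioc_union_Ioi_eq_Ioi hT0.le] at h3
  have htend : Filter.Tendsto (fun t : ℝ => g (x + t • w)) Filter.atTop (nhds (0:ℝ)) := by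
    apply Filter.Tendsto.congr' _ tendsto_const_nhds
    filter_upwards [Filter.eventually_ge_atTop T] with t ht
    exact (hs _ (hfar t ht)).symm
  have hmain := integral_Ioi_of_hasDerivAt_of_tendsto
    ((hderiv 0).continuousAt.continuousWithinAt) (fun t _ => hderiv t) hint htend
  simpa using hmain

lemma clm_expand (L : ℝ × ℝ →L[ℝ] ℝ) (a : ℝ × ℝ) :
    L a = a.1 * L ((1:ℝ), (0:ℝ)) + a.2 * L ((0:ℝ), (1:ℝ)) := by
  have ha : a = a.1 • ((1:ℝ), (0:ℝ)) + a.2 • ((0:ℝ), (1:ℝ)) := by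
    ext <;> simp
  conv_lhs => rw [ha]
  rw [map_add, L.map_smul, L.map_smul, smul_eq_mul, smul_eq_mul]

lemma clm2_expand (L : ℝ × ℝ →L[ℝ] (ℝ × ℝ →L[ℝ] ℝ)) (a b : ℝ × ℝ) :
    L a b = a.1 * b.1 * L ((1:ℝ),(0:ℝ)) ((1:ℝ),(0:ℝ)) + a.1 * b.2 * L ((1:ℝ),(0:ℝ)) ((0:ℝ),(1:ℝ))
      + a.2 * b.1 * L ((0:ℝ),(1:ℝ)) ((1:ℝ),(0:ℝ)) + a.2 * b.2 * L ((0:ℝ),(1:ℝ)) ((0:ℝ),(1:ℝ)) := by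
  have ha : a = a.1 • ((1:ℝ), (0:ℝ)) + a.2 • ((0:ℝ), (1:ℝ)) := by ext <;> simp
  conv_lhs => rw [ha]
  rw [map_add, L.map_smul, L.map_smul]
  simp only [ContinuousLinearMap.add_apply, ContinuousLinearMap.smul_apply, smul_eq_mul]
  rw [clm_expand (L ((1:ℝ),(0:ℝ))) b, clm_expand (L ((0:ℝ),(1:ℝ))) b]
  ring

theorem recover_potential_d2
    (u1 u2 : ℝ) (hu : u1 ^ 2 + u2 ^ 2 = 1) (hu1 : 0 < u1) (hu2 : 0 < u2)
    (φ : ℝ × ℝ → ℝ) (hφ : ContDiff ℝ 2 φ) (hsupp : SuppInDisc φ)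
    (f11 f12 f22 : ℝ × ℝ → ℝ)
    (hf11 : ∀ y : ℝ × ℝ, f11 y =
      fderiv ℝ (fun z => fderiv ℝ φ z ((1 : ℝ), (0 : ℝ))) y ((1 : ℝ), (0 : ℝ)))
    (hf12 : ∀ y : ℝ × ℝ, f12 y =
      fderiv ℝ (fun z => fderiv ℝ φ z ((0 : ℝ), (1 : ℝ))) y ((1 : ℝ), (0 : ℝ)))
    (hf22 : ∀ y : ℝ × ℝ, f22 y =
      fderiv ℝ (fun z => fderiv ℝ φ z ((0 : ℝ), (1 : ℝ))) y ((0 : ℝ), (1 : ℝ)))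
    (x : ℝ × ℝ) :
    φ x = (1 / (2 * u2)) * Xbeam ((0 : ℝ), (1 : ℝ)) (VlineL u1 u2 f11 f12 f22) x ∧
    φ x = -(1 / (2 * u2)) * Xbeam ((1 : ℝ), (0 : ℝ)) (VlineM u1 u2 f11 f12 f22) x := by
  have hφ1 : ContDiff ℝ 1 φ := hφ.of_le one_le_two
  have hF : ContDiff ℝ 1 (fderiv ℝ φ) := hφ.fderiv_right (by norm_num)
  have hU : IsOpen {z : ℝ × ℝ | 1 < z.1 ^ 2 + z.2 ^ 2} :=
    isOpen_lt continuous_const (by fun_prop)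
  have hφs : ∀ y : ℝ × ℝ, 1 < y.1 ^ 2 + y.2 ^ 2 → φ y = 0 :=
    fun y hy => hsupp y hy.le
  have hφ0 : ∀ y : ℝ × ℝ, 1 < y.1 ^ 2 + y.2 ^ 2 → fderiv ℝ φ y = 0 := by
    intro y hy
    have hev : φ =ᶠ[nhds y] (fun _ => (0:ℝ)) :=
      Filter.eventually_of_mem (hU.mem_nhds hy) (fun z hz => hφs z hz)
    rw [hev.fderiv_eq]
    exact fderiv_const_apply 0
  have hD : ∀ (b y a : ℝ × ℝ), fderiv ℝ (fun z => fderiv ℝ φ z b) y a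
      = fderiv ℝ (fderiv ℝ φ) y a b := by
    intro b y a
    have h := fderiv_clm_apply (c := fderiv ℝ φ) (u := fun _ => b)
      ((hF.differentiable one_ne_zero) y) (differentiableAt_const b)
    rw [h]
    simp
  have hSym : ∀ (y a b : ℝ × ℝ), fderiv ℝ (fderiv ℝ φ) y a b
      = fderiv ℝ (fderiv ℝ φ) y b a :=
    fun y a b => second_derivative_symmetric
      (fun z => ((hφ1.differentiable one_ne_zero) z).hasFDerivAt)
      (((hF.differentiable one_ne_zero) y).hasFDerivAt) a b
  have hfval : ∀ (z d b : ℝ × ℝ), fderiv ℝ (fun z' => fderiv ℝ φ z' b) z d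
      = d.1 * b.1 * f11 z + (d.1 * b.2 + d.2 * b.1) * f12 z + d.2 * b.2 * f22 z := by
    intro z d b
    have h11 : fderiv ℝ (fderiv ℝ φ) z ((1:ℝ),(0:ℝ)) ((1:ℝ),(0:ℝ)) = f11 z := by
      rw [hf11 z, hD]
    have h12 : fderiv ℝ (fderiv ℝ φ) z ((1:ℝ),(0:ℝ)) ((0:ℝ),(1:ℝ)) = f12 z := by
      rw [hf12 z, hD]
    have h21 : fderiv ℝ (fderiv ℝ φ) z ((0:ℝ),(1:ℝ)) ((1:ℝ),(0:ℝ)) = f12 z :=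
      (hSym z _ _).trans h12
    have h22 : fderiv ℝ (fderiv ℝ φ) z ((0:ℝ),(1:ℝ)) ((0:ℝ),(1:ℝ)) = f22 z := by
      rw [hf22 z, hD]
    rw [hD b z d, clm2_expand, h11, h12, h21, h22]
    ring
  have key : ∀ (d1 d2 b1 b2 : ℝ), d1 ^ 2 + d2 ^ 2 = 1 → ∀ y : ℝ × ℝ,
      (∫ t in Set.Ioi (0:ℝ), (d1 * b1 * f11 (y + t • ((d1:ℝ), d2))
        + (d1 * b2 + d2 * b1) * f12 (y + t • ((d1:ℝ), d2))
        + d2 * b2 * f22 (y + t • ((d1:ℝ), d2))))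
      = -(fderiv ℝ φ y ((b1:ℝ), b2)) := by
    intro d1 d2 b1 b2 hd y
    have hgc : ContDiff ℝ 1 (fun z => fderiv ℝ φ z ((b1:ℝ), b2)) :=
      (ContinuousLinearMap.apply ℝ ℝ ((b1:ℝ), b2)).contDiff.comp hF
    have hgs : ∀ z : ℝ × ℝ, 1 < z.1 ^ 2 + z.2 ^ 2 → fderiv ℝ φ z ((b1:ℝ), b2) = 0 := by
      intro z hz; rw [hφ0 z hz]; rfl
    have h := ftc_beam (fun z => fderiv ℝ φ z ((b1:ℝ), b2)) hgc hgs ((d1:ℝ), d2) hd y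
    rw [← h]
    congr 1
    funext t
    rw [hfval (y + t • ((d1:ℝ), d2)) ((d1:ℝ), d2) ((b1:ℝ), b2)]
  have hv : (-u1) ^ 2 + u2 ^ 2 = 1 := by nlinarith [hu]
  have hL : VlineL u1 u2 f11 f12 f22
      = fun y => -(2 * u2) * fderiv ℝ φ y ((0:ℝ), (1:ℝ)) := by
    funext y
    have eA : (∫ t in Set.Ioi (0:ℝ), (u1 ^ 2 * f11 (y + t • ((u1:ℝ), u2))
        + 2 * u1 * u2 * f12 (y + t • ((u1:ℝ), u2))
        + u2 ^ 2 * f22 (y + t • ((u1:ℝ), u2))))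
        = -(fderiv ℝ φ y ((u1:ℝ), u2)) := by
      rw [← key u1 u2 u1 u2 hu y]
      congr 1; funext t; ring
    have eB : (∫ t in Set.Ioi (0:ℝ), (u1 ^ 2 * f11 (y + t • ((-u1:ℝ), u2))
        - 2 * u1 * u2 * f12 (y + t • ((-u1:ℝ), u2))
        + u2 ^ 2 * f22 (y + t • ((-u1:ℝ), u2))))
        = -(fderiv ℝ φ y ((-u1:ℝ), u2)) := by
      rw [← key (-u1) u2 (-u1) u2 hv y]
      congr 1; funext t; ring
    simp only [VlineL, Pi.add_apply, Xbeam]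
    rw [eA, eB, clm_expand (fderiv ℝ φ y) ((u1:ℝ), u2),
      clm_expand (fderiv ℝ φ y) ((-u1:ℝ), u2)]
    simp only []
    ring
  have hM : VlineM u1 u2 f11 f12 f22
      = fun y => (2 * u2) * fderiv ℝ φ y ((1:ℝ), (0:ℝ)) := by
    funext y
    have eA : (∫ t in Set.Ioi (0:ℝ), (-(u1 * u2) * f11 (y + t • ((u1:ℝ), u2))
        + (u1 ^ 2 - u2 ^ 2) * f12 (y + t • ((u1:ℝ), u2))
        + u1 * u2 * f22 (y + t • ((u1:ℝ), u2))))
        = -(fderiv ℝ φ y ((-u2:ℝ), u1)) := by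
      rw [← key u1 u2 (-u2) u1 hu y]
      congr 1; funext t; ring
    have eB : (∫ t in Set.Ioi (0:ℝ), (u1 * u2 * f11 (y + t • ((-u1:ℝ), u2))
        + (u1 ^ 2 - u2 ^ 2) * f12 (y + t • ((-u1:ℝ), u2))
        - u1 * u2 * f22 (y + t • ((-u1:ℝ), u2))))
        = -(fderiv ℝ φ y ((-u2:ℝ), -u1)) := by
      rw [← key (-u1) u2 (-u2) (-u1) hv y]
      congr 1; funext t; ring
    simp only [VlineM, Pi.add_apply, Xbeam]
    rw [eA, eB, clm_expand (fderiv ℝ φ y) ((-u2:ℝ), u1),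
      clm_expand (fderiv ℝ φ y) ((-u2:ℝ), -u1)]
    simp only []
    ring
  have hu2ne : u2 ≠ 0 := ne_of_gt hu2
  have hftc2 : (∫ t in Set.Ioi (0:ℝ), fderiv ℝ φ (x + t • ((0:ℝ),(1:ℝ))) ((0:ℝ),(1:ℝ)))
      = - φ x := ftc_beam φ hφ1 hφs ((0:ℝ),(1:ℝ)) (by norm_num) x
  have hftc1 : (∫ t in Set.Ioi (0:ℝ), fderiv ℝ φ (x + t • ((1:ℝ),(0:ℝ))) ((1:ℝ),(0:ℝ)))
      = - φ x := ftc_beam φ hφ1 hφs ((1:ℝ),(0:ℝ)) (by norm_num) x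
  constructor
  · rw [Xbeam, hL]
    simp only []
    rw [MeasureTheory.integral_const_mul, hftc2]
    field_simp
  · rw [Xbeam, hM]
    simp only []
    rw [MeasureTheory.integral_const_mul, hftc1]
    field_simp
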